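/- For every integer m ≥ 2, the function α ↦ J_m(α) is nonincreasing on (0,∞); that is, for all 0 < A ≤ α, J_m(α) ≤ J_m(A). -/

import Mathlib

/-!
Formalization of statements from "The strong interaction limit of
continuous-time weakly self-avoiding walk" by Brydges, Dahlqvist, Slade.

An `n`-step nearest-neighbour walk on `ℤ^d` starting at the origin is encoded
bijectively by its sequence of steps `s : Fin n → Fin d × Bool`, a step being a
coordinate direction together with a sign.
-/

open scoped BigOperators Topology
open Filter

namespace StrongInteraction

/-- The unit step in coordinate direction `e.1`, with sign `e.2`. -/
def stepVec (d : ℕ) (e : Fin d × Bool) : Fin d → ℤ :=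
  fun i => if i = e.1 then (if e.2 then 1 else -1) else 0

/-- `walkPos s k` is the position `Y_k` of the walk started at the origin whose
successive nearest-neighbour steps are given by `s`. -/
def walkPos {d n : ℕ} (s : Fin n → Fin d × Bool) (k : Fin (n + 1)) : Fin d → ℤ :=
  ∑ i ∈ Finset.univ.filter (fun i : Fin n => (i : ℕ) < (k : ℕ)), stepVec d (s i)

/-- `n_x(Y)`: the number of visits to `x` by the walk. -/
def visits {d n : ℕ} (s : Fin n → Fin d × Bool) (x : Fin d → ℤ) : ℕ :=
  (Finset.univ.filter (fun k : Fin (n + 1) => walkPos s k = x)).card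

/-- The set of distinct vertices visited by the walk. -/
def walkRange {d n : ℕ} (s : Fin n → Fin d × Bool) : Finset (Fin d → ℤ) :=
  Finset.image (walkPos s) Finset.univ

/-- A walk is self-avoiding when its positions are pairwise distinct. -/
def SelfAvoiding {d n : ℕ} (s : Fin n → Fin d × Bool) : Prop :=
  Function.Injective (walkPos s)

instance {d n : ℕ} (s : Fin n → Fin d × Bool) : Decidable (SelfAvoiding s) :=
  inferInstanceAs (Decidable (Function.Injective (walkPos s)))

/-- `c_n`: the number of `n`-step self-avoiding walks. -/
def csaw (d n : ℕ) : ℕ :=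
  (Finset.univ.filter fun s : Fin n → Fin d × Bool => SelfAvoiding s).card


/-- `J_m(α) = ∫_{-α}^∞ ((1+u/α)^{m-1}/(m-1)!) e^{-u²} du`. -/
noncomputable def Jfun (α : ℝ) (m : ℕ) : ℝ :=
  ∫ u in Set.Ioi (-α), ((1 + u / α) ^ (m - 1) / (Nat.factorial (m - 1))) * Real.exp (-u ^ 2)


open MeasureTheory Real Set

lemma integrable_abs_pow_exp (k : ℕ) :
    Integrable (fun x : ℝ => |x| ^ k * Real.exp (-x ^ 2)) := by
  have hk : (-1 : ℝ) < (k : ℝ) := lt_of_lt_of_le neg_one_lt_zero (Nat.cast_nonneg k)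
  have h := (integrable_rpow_mul_exp_neg_mul_sq (b := 1) one_pos hk).abs
  have : (fun x : ℝ => |x ^ (k : ℝ) * Real.exp (-1 * x ^ 2)|)
      = fun x : ℝ => |x| ^ k * Real.exp (-x ^ 2) := by
    funext x
    rw [abs_mul, abs_of_nonneg (Real.exp_pos _).le, rpow_natCast, abs_pow]
    ring_nf
  rwa [this] at h

lemma integrable_exp_sq : Integrable (fun x : ℝ => Real.exp (-x ^ 2)) := by
  have := integrable_exp_neg_mul_sq (b := (1:ℝ)) one_pos
  simpa using this

lemma integrable_binom (c : ℝ) (hc : 0 < c) (n : ℕ) :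
    Integrable (fun u : ℝ => (1 + |u| / c) ^ n * Real.exp (-u ^ 2)) := by
  have heq : (fun u : ℝ => (1 + |u| / c) ^ n * Real.exp (-u ^ 2))
      = fun u : ℝ => ∑ k ∈ Finset.range (n + 1),
          ((1 / c) ^ (n - k) * (n.choose k : ℝ)) * (|u| ^ (n - k) * Real.exp (-u ^ 2)) := by
    funext u
    rw [add_pow, Finset.sum_mul]
    apply Finset.sum_congr rfl
    intro k _
    rw [one_pow, div_pow, one_mul]
    field_simp
    have hc1 : c ^ (n - k) * (1 / c) ^ (n - k) = 1 := by
      rw [← mul_pow, mul_one_div_cancel hc.ne', one_pow]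
    linear_combination (-(|u| ^ (n - k) * (n.choose k : ℝ))) * hc1
  rw [heq]
  apply integrable_finset_sum
  intro k _
  exact (integrable_abs_pow_exp (n - k)).const_mul _

lemma integrable_max_pow (c : ℝ) (hc : 0 < c) (n : ℕ) :
    Integrable (fun u : ℝ => max (1 + u / c) 0 ^ n * Real.exp (-u ^ 2)) := by
  refine (integrable_binom c hc n).mono' ?_ ?_
  · apply Continuous.aestronglyMeasurable
    exact ((continuous_const.add (continuous_id.div_const c)).max continuous_const |>.pow n).mul
      ((continuous_id.pow 2).neg.rexp)
  · filter_upwards with u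
    rw [Real.norm_eq_abs, abs_mul, abs_of_nonneg (Real.exp_pos _).le, abs_pow,
      abs_of_nonneg (le_max_right _ _)]
    have h1 : max (1 + u / c) 0 ≤ 1 + |u| / c := by
      apply max_le
      · gcongr; exact le_abs_self u
      · positivity
    have h2 : max (1 + u / c) 0 ^ n ≤ (1 + |u| / c) ^ n :=
      pow_le_pow_left₀ (le_max_right _ _) h1 n
    gcongr

lemma Jfun_eq (c : ℝ) (hc : 0 < c) (m : ℕ) (hm : 2 ≤ m) :
    (∫ u in Set.Ioi (-c), ((1 + u / c) ^ (m - 1) / (Nat.factorial (m - 1))) * Real.exp (-u ^ 2))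
      = ∫ u : ℝ, max (1 + u / c) 0 ^ (m - 1) / (Nat.factorial (m - 1)) * Real.exp (-u ^ 2) := by
  have h2 : (∫ u : ℝ, max (1 + u / c) 0 ^ (m - 1) / (Nat.factorial (m - 1)) * Real.exp (-u ^ 2))
      = ∫ u in Set.Ioi (-c),
          max (1 + u / c) 0 ^ (m - 1) / (Nat.factorial (m - 1)) * Real.exp (-u ^ 2) := by
    refine (setIntegral_eq_integral_of_forall_compl_eq_zero ?_).symm
    intro u hu
    rw [Set.mem_Ioi, not_lt] at hu
    have h0 : 1 + u / c ≤ 0 := by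
      have : u / c ≤ -1 := by rw [div_le_iff₀ hc]; linarith
      linarith
    rw [max_eq_right h0, zero_pow (by omega), zero_div, zero_mul]
  rw [h2]
  apply setIntegral_congr_fun measurableSet_Ioi
  intro u hu
  rw [Set.mem_Ioi] at hu
  have : 0 ≤ 1 + u / c := by
    have : -1 < u / c := by
      rw [neg_lt, ← neg_div]
      exact (div_lt_one hc).mpr (by linarith)
    linarith
  simp only [max_eq_left this]

lemma integral_id_exp_sq : (∫ u : ℝ, u * Real.exp (-u ^ 2)) = 0 := by
  have h := integral_neg_eq_self (fun u : ℝ => u * Real.exp (-u ^ 2)) (volume : Measure ℝ)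
  simp only [neg_sq, neg_mul] at h
  rw [integral_neg] at h
  linarith



-- scalar convexity inequality
lemma max_pow_convex (n : ℕ) (hn : 1 ≤ n) (x lam : ℝ) (h0 : 0 < lam) (h1 : lam ≤ 1) :
    max (lam * x + (1 - lam)) 0 ^ n ≤ lam * max x 0 ^ n + (1 - lam) := by
  rcases le_or_gt 0 x with hx | hx
  · have hs : 0 ≤ lam * x + (1 - lam) := by nlinarith
    rw [max_eq_left hs, max_eq_left hx]
    have hc := (convexOn_pow (𝕜 := ℝ) n).2 (Set.mem_Ici.mpr hx) (Set.mem_Ici.mpr zero_le_one)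
      h0.le (by linarith : (0:ℝ) ≤ 1 - lam) (by ring)
    simpa [smul_eq_mul] using hc
  · rw [max_eq_right hx.le]
    rcases le_or_gt (lam * x + (1 - lam)) 0 with hs | hs
    · rw [max_eq_right hs]
      simp only [zero_pow (by omega : n ≠ 0)]
      nlinarith
    · rw [max_eq_left hs.le, zero_pow (by omega : n ≠ 0)]
      have hle1 : lam * x + (1 - lam) ≤ 1 := by nlinarith
      have h2 := pow_le_of_le_one hs.le hle1 (by omega : n ≠ 0)
      have h3 : lam * x < 0 := mul_neg_of_pos_of_neg h0 hx
      nlinarith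

-- Bernoulli-type tangent inequality
lemma bernoulli_max (n : ℕ) (hn : 1 ≤ n) (a : ℝ) :
    1 + n * a ≤ max (1 + a) 0 ^ n := by
  rcases le_or_gt 0 (1 + a) with h | h
  · rw [max_eq_left h]
    exact one_add_mul_le_pow (by linarith) n
  · rw [max_eq_right h.le]
    simp only [zero_pow (by omega : n ≠ 0)]
    have ha : a ≤ -1 := by linarith
    have hn' : (1:ℝ) ≤ (n:ℝ) := by exact_mod_cast hn
    nlinarith

/-- for `m ≥ 2`, `α ↦ J_m(α)` is nonincreasing on `(0,∞)`. -/
theorem J_antitone (m : ℕ) (hm : 2 ≤ m) (A α : ℝ) (hA : 0 < A) (hAα : A ≤ α) :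
    Jfun α m ≤ Jfun A m := by
  have hα : 0 < α := lt_of_lt_of_le hA hAα
  set n := m - 1 with hndef
  have hn : 1 ≤ n := by omega
  set lam := A / α with hlam
  have hlam0 : 0 < lam := div_pos hA hα
  have hlam1 : lam ≤ 1 := (div_le_one hα).mpr hAα
  have hK : (0:ℝ) < (Nat.factorial n : ℝ) := by exact_mod_cast Nat.factorial_pos n
  set K : ℝ := (Nat.factorial n : ℝ)
  set fα : ℝ → ℝ := fun u => max (1 + u / α) 0 ^ n / K * Real.exp (-u ^ 2) with hfα
  set fA : ℝ → ℝ := fun u => max (1 + u / A) 0 ^ n / K * Real.exp (-u ^ 2) with hfA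
  have hJα : Jfun α m = ∫ u : ℝ, fα u := Jfun_eq α hα m hm
  have hJA : Jfun A m = ∫ u : ℝ, fA u := Jfun_eq A hA m hm
  have intα : Integrable fα := (integrable_max_pow α hα n).div_const K |>.congr
    (by filter_upwards with u; ring)
  have intA : Integrable fA := (integrable_max_pow A hA n).div_const K |>.congr
    (by filter_upwards with u; ring)
  -- pointwise step A
  have hpt : ∀ u : ℝ, fα u ≤ lam * fA u + ((1 - lam) / K) * Real.exp (-u ^ 2) := by
    intro u
    have hcomb : 1 + u / α = lam * (1 + u / A) + (1 - lam) := by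
      rw [hlam]
      field_simp
      ring
    have hkey : max (1 + u / α) 0 ^ n ≤ lam * max (1 + u / A) 0 ^ n + (1 - lam) := by
      rw [hcomb]
      exact max_pow_convex n hn _ lam hlam0 hlam1
    have hE : 0 ≤ Real.exp (-u ^ 2) := (Real.exp_pos _).le
    have expand : lam * fA u + ((1 - lam) / K) * Real.exp (-u ^ 2) - fα u
        = (lam * max (1 + u / A) 0 ^ n + (1 - lam) - max (1 + u / α) 0 ^ n)
          * Real.exp (-u ^ 2) / K := by
      simp only [hfα, hfA]; ring
    have hnn : 0 ≤ (lam * max (1 + u / A) 0 ^ n + (1 - lam) - max (1 + u / α) 0 ^ n)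
        * Real.exp (-u ^ 2) / K :=
      div_nonneg (mul_nonneg (by linarith) hE) hK.le
    linarith [expand, hnn]
  -- integral step A
  have intRHS : Integrable (fun u : ℝ => lam * fA u + ((1 - lam) / K) * Real.exp (-u ^ 2)) :=
    (intA.const_mul lam).add (integrable_exp_sq.const_mul _)
  have stepA : Jfun α m ≤ lam * Jfun A m + ((1 - lam) / K) * ∫ u : ℝ, Real.exp (-u ^ 2) := by
    rw [hJα, hJA]
    calc (∫ u : ℝ, fα u)
        ≤ ∫ u : ℝ, (lam * fA u + ((1 - lam) / K) * Real.exp (-u ^ 2)) :=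
          integral_mono intα intRHS hpt
      _ = lam * (∫ u : ℝ, fA u) + ((1 - lam) / K) * ∫ u : ℝ, Real.exp (-u ^ 2) := by
          rw [integral_add (intA.const_mul lam) (integrable_exp_sq.const_mul _),
            integral_const_mul, integral_const_mul]
  -- step B : (1/K) * I ≤ Jfun A m
  have hptB : ∀ u : ℝ, (1 / K) * Real.exp (-u ^ 2)
      + ((n : ℝ) / (A * K)) * (u * Real.exp (-u ^ 2)) ≤ fA u := by
    intro u
    have hber : 1 + (n : ℝ) * (u / A) ≤ max (1 + u / A) 0 ^ n := bernoulli_max n hn (u / A)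
    have hE : 0 ≤ Real.exp (-u ^ 2) := (Real.exp_pos _).le
    have expand : fA u - ((1 / K) * Real.exp (-u ^ 2)
        + ((n : ℝ) / (A * K)) * (u * Real.exp (-u ^ 2)))
        = (max (1 + u / A) 0 ^ n - (1 + (n : ℝ) * (u / A))) * Real.exp (-u ^ 2) / K := by
      simp only [hfA]
      field_simp
    have hnn : 0 ≤ (max (1 + u / A) 0 ^ n - (1 + (n : ℝ) * (u / A))) * Real.exp (-u ^ 2) / K :=
      div_nonneg (mul_nonneg (by linarith) hE) hK.le
    linarith [expand, hnn]
  have intLHS : Integrable (fun u : ℝ => (1 / K) * Real.exp (-u ^ 2)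
      + ((n : ℝ) / (A * K)) * (u * Real.exp (-u ^ 2))) :=
    (integrable_exp_sq.const_mul _).add
      ((integrable_mul_exp_neg_mul_sq one_pos).congr
        (by filter_upwards with u; simp) |>.const_mul _)
  have stepB : (1 / K) * (∫ u : ℝ, Real.exp (-u ^ 2)) ≤ Jfun A m := by
    rw [hJA]
    calc (1 / K) * (∫ u : ℝ, Real.exp (-u ^ 2))
        = ∫ u : ℝ, ((1 / K) * Real.exp (-u ^ 2)
            + ((n : ℝ) / (A * K)) * (u * Real.exp (-u ^ 2))) := by
          rw [integral_add (integrable_exp_sq.const_mul _)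
              (((integrable_mul_exp_neg_mul_sq one_pos).congr
                (by filter_upwards with u; simp)).const_mul _),
            integral_const_mul, integral_const_mul, integral_id_exp_sq, mul_zero, add_zero]
      _ ≤ ∫ u : ℝ, fA u := integral_mono intLHS intA hptB
  have hfinal : ((1 - lam) / K) * (∫ u : ℝ, Real.exp (-u ^ 2))
      ≤ (1 - lam) * Jfun A m := by
    have h1 : (0:ℝ) ≤ 1 - lam := by linarith
    have := mul_le_mul_of_nonneg_left stepB h1
    calc ((1 - lam) / K) * (∫ u : ℝ, Real.exp (-u ^ 2))
        = (1 - lam) * ((1 / K) * (∫ u : ℝ, Real.exp (-u ^ 2))) := by ring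
      _ ≤ (1 - lam) * Jfun A m := this
  linarith [stepA, hfinal]


end StrongInteraction
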